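/- Consider a two-phase three-state quantum walk with finitely many defects and λ ∈ [0,2π) with e^{iλ} ≠ a_x^{(2,2)} and A_x(λ) ≠ 0 for all x ∈ ℤ. If e^{iλ} is an eigenvalue of U, then its eigenspace ker(U − e^{iλ}) is one-dimensional. -/

import Mathlib

open Complex Matrix ComplexConjugate

noncomputable section

/-- `Ψ` belongs to the kernel of `U − μ` for the three-state quantum walk `U = SC`
with coins `a x`: it is square summable and satisfies `UΨ = μΨ` componentwise. -/
def QWKerMem (a : ℤ → Matrix (Fin 3) (Fin 3) ℂ) (μ : ℂ) (Ψ : ℤ → Fin 3 → ℂ) : Prop :=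
  Summable (fun x : ℤ => ∑ i, ‖Ψ x i‖ ^ 2) ∧
    ∀ x : ℤ,
      μ * Ψ x 0 = ∑ j, a (x + 1) 0 j * Ψ (x + 1) j ∧
      μ * Ψ x 1 = ∑ j, a x 1 j * Ψ x j ∧
      μ * Ψ x 2 = ∑ j, a (x - 1) 2 j * Ψ (x - 1) j

/-- `μ` is an eigenvalue of the time-evolution operator `U = SC`. -/
def IsQWEigenvalue (a : ℤ → Matrix (Fin 3) (Fin 3) ℂ) (μ : ℂ) : Prop :=
  ∃ Ψ : ℤ → Fin 3 → ℂ, Ψ ≠ 0 ∧ QWKerMem a μ Ψ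

/-- `A(λ)` for a 3×3 coin matrix `M`. -/
def coefA (M : Matrix (Fin 3) (Fin 3) ℂ) (lam : ℝ) : ℂ :=
  M 0 0 + M 0 1 * M 1 0 / (Complex.exp (lam * Complex.I) - M 1 1)

lemma QW_mu_conj (lam : ℝ) :
    Complex.exp (lam * Complex.I) * conj (Complex.exp (lam * Complex.I)) = 1 := by
  rw [← Complex.exp_conj, _root_.map_mul, Complex.conj_ofReal, Complex.conj_I, ← Complex.exp_add]
  ring_nf
  exact Complex.exp_zero

lemma QW_unitary_det (M : Matrix (Fin 3) (Fin 3) ℂ)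
    (hM : M ∈ Matrix.unitaryGroup (Fin 3) ℂ) : M.det * conj M.det = 1 := by
  have h := Matrix.mem_unitaryGroup_iff.mp hM
  have := congrArg Matrix.det h
  rwa [Matrix.det_mul, Matrix.star_eq_conjTranspose, Matrix.det_conjTranspose,
    Matrix.det_one] at this

lemma QW_adj_eq (M : Matrix (Fin 3) (Fin 3) ℂ)
    (hM : M ∈ Matrix.unitaryGroup (Fin 3) ℂ) :
    M.adjugate = M.det • star M := by
  calc M.adjugate = M.adjugate * (M * star M) := by
        rw [Matrix.mem_unitaryGroup_iff.mp hM, mul_one]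
    _ = (M.adjugate * M) * star M := by rw [mul_assoc]
    _ = (M.det • (1 : Matrix (Fin 3) (Fin 3) ℂ)) * star M := by rw [Matrix.adjugate_mul]
    _ = M.det • star M := by rw [Matrix.smul_mul, one_mul]

lemma QW_E_ne_zero (M : Matrix (Fin 3) (Fin 3) ℂ)
    (hM : M ∈ Matrix.unitaryGroup (Fin 3) ℂ) (μ : ℂ) (hμ : μ * conj μ = 1)
    (hA' : M 0 0 * (μ - M 1 1) + M 0 1 * M 1 0 ≠ 0) :
    M 2 2 * (μ - M 1 1) + M 2 1 * M 1 2 ≠ 0 := by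
  have hadj := QW_adj_eq M hM
  have h22 : M 0 0 * M 1 1 - M 0 1 * M 1 0 = M.det * conj (M 2 2) := by
    have := congrFun (congrFun hadj 2) 2
    rw [Matrix.adjugate_fin_three] at this
    simpa [Matrix.star_eq_conjTranspose, Matrix.conjTranspose_apply] using this
  have h00 : M 1 1 * M 2 2 - M 1 2 * M 2 1 = M.det * conj (M 0 0) := by
    have := congrFun (congrFun hadj 0) 0
    rw [Matrix.adjugate_fin_three] at this
    simpa [Matrix.star_eq_conjTranspose, Matrix.conjTranspose_apply] using this
  have hd := QW_unitary_det M hM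
  intro h
  apply hA'
  have h1 : μ * M 2 2 = M.det * conj (M 0 0) := by linear_combination h + h00
  have h2 : conj μ * conj (M 2 2) = conj M.det * M 0 0 := by
    have := congrArg conj h1
    simpa [_root_.map_mul] using this
  have h3 : M.det * conj (M 2 2) = μ * M 0 0 := by
    have := congrArg (fun z => μ * M.det * z) h2
    linear_combination this - M.det * conj (M 2 2) * hμ + μ * M 0 0 * hd
  linear_combination -h3 - h22

lemma QW_dot_eq (w : Fin 3 → ℂ) : star w ⬝ᵥ w = ((∑ i, ‖w i‖ ^ 2 : ℝ) : ℂ) := by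
  simp only [dotProduct, Pi.star_apply, Complex.star_def]
  push_cast
  refine Finset.sum_congr rfl fun i _ => ?_
  rw [mul_comm, Complex.mul_conj]
  norm_cast
  rw [Complex.sq_norm]

lemma QW_norm_conserve (M : Matrix (Fin 3) (Fin 3) ℂ)
    (hM : M ∈ Matrix.unitaryGroup (Fin 3) ℂ) (v : Fin 3 → ℂ) :
    ∑ i, ‖M.mulVec v i‖ ^ 2 = ∑ i, ‖v i‖ ^ 2 := by
  have key : star (M.mulVec v) ⬝ᵥ (M.mulVec v) = star v ⬝ᵥ v := by
    rw [Matrix.star_mulVec, Matrix.dotProduct_mulVec, Matrix.vecMul_vecMul,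
      ← Matrix.star_eq_conjTranspose, Matrix.mem_unitaryGroup_iff'.mp hM, Matrix.vecMul_one]
  rw [QW_dot_eq, QW_dot_eq] at key
  exact_mod_cast key

lemma QW_vanish (a : ℤ → Matrix (Fin 3) (Fin 3) ℂ)
    (hunit : ∀ x, a x ∈ Matrix.unitaryGroup (Fin 3) ℂ) (lam : ℝ)
    (hne : ∀ x, Complex.exp (lam * Complex.I) ≠ a x 1 1)
    (hA : ∀ x, coefA (a x) lam ≠ 0)
    (Θ : ℤ → Fin 3 → ℂ) (hΘ : QWKerMem a (Complex.exp (lam * Complex.I)) Θ)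
    (x₀ : ℤ) (h00 : Θ x₀ 0 = 0) : Θ = 0 := by
  set μ := Complex.exp (lam * Complex.I) with hμdef
  obtain ⟨hsum, heq⟩ := hΘ
  have hu : ∀ x, μ - a x 1 1 ≠ 0 := fun x => sub_ne_zero.mpr (hne x)
  have hA' : ∀ x, a x 0 0 * (μ - a x 1 1) + a x 0 1 * a x 1 0 ≠ 0 := by
    intro x h
    have hc : coefA (a x) lam * (μ - a x 1 1)
        = a x 0 0 * (μ - a x 1 1) + a x 0 1 * a x 1 0 := by
      rw [coefA, ← hμdef, add_mul, div_mul_cancel₀ _ (hu x)]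
    rcases mul_eq_zero.mp (hc.trans h) with h' | h'
    · exact hA x h'
    · exact hu x h'
  have hE : ∀ x, a x 2 2 * (μ - a x 1 1) + a x 2 1 * a x 1 2 ≠ 0 :=
    fun x => QW_E_ne_zero _ (hunit x) μ (QW_mu_conj lam) (hA' x)
  have habs : ∀ z : ℂ, ‖μ * z‖ = ‖z‖ := by
    intro z
    rw [norm_mul, hμdef, Complex.norm_exp_ofReal_mul_I, one_mul]
  -- conservation key
  have hkey : ∀ x : ℤ, ‖Θ (x - 1) 0‖ ^ 2 + ‖Θ x 1‖ ^ 2 + ‖Θ (x + 1) 2‖ ^ 2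
      = ∑ i, ‖Θ x i‖ ^ 2 := by
    intro x
    have hc := QW_norm_conserve (a x) (hunit x) (Θ x)
    have e0 : (a x).mulVec (Θ x) 0 = μ * Θ (x - 1) 0 := by
      have h := (heq (x - 1)).1
      rw [show x - 1 + 1 = x by ring] at h
      simpa [Matrix.mulVec, dotProduct] using h.symm
    have e1 : (a x).mulVec (Θ x) 1 = μ * Θ x 1 := by
      have h := (heq x).2.1
      simpa [Matrix.mulVec, dotProduct] using h.symm
    have e2 : (a x).mulVec (Θ x) 2 = μ * Θ (x + 1) 2 := by
      have h := (heq (x + 1)).2.2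
      rw [show x + 1 - 1 = x by ring] at h
      simpa [Matrix.mulVec, dotProduct] using h.symm
    calc ‖Θ (x - 1) 0‖ ^ 2 + ‖Θ x 1‖ ^ 2 + ‖Θ (x + 1) 2‖ ^ 2
        = ∑ i, ‖(a x).mulVec (Θ x) i‖ ^ 2 := by
          rw [Fin.sum_univ_three, e0, e1, e2, habs, habs, habs]
      _ = ∑ i, ‖Θ x i‖ ^ 2 := hc
  -- J is constant
  set f : ℤ → ℝ := fun x => ‖Θ x 0‖ ^ 2 - ‖Θ (x + 1) 2‖ ^ 2 with hf
  have hstep : ∀ x : ℤ, f x = f (x + 1) := by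
    intro x
    have h1 := hkey (x + 1)
    rw [show x + 1 - 1 = x by ring, Fin.sum_univ_three] at h1
    simp only [hf]
    linarith
  have hconst : ∀ x, f x = f 0 := by
    intro x
    induction x using Int.induction_on with
    | zero => rfl
    | succ n ih => rw [← hstep]; exact ih
    | pred n ih =>
        have h := hstep (-(n : ℤ) - 1)
        rw [show -(n : ℤ) - 1 + 1 = -(n : ℤ) by ring] at h
        rw [h]; exact ih
  -- J = 0 by decay
  have hg : Filter.Tendsto (fun x : ℤ => ∑ i, ‖Θ x i‖ ^ 2) Filter.cofinite (nhds 0) :=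
    hsum.tendsto_cofinite_zero
  have hle : ∀ (i : Fin 3) (x : ℤ), ‖Θ x i‖ ^ 2 ≤ ∑ j, ‖Θ x j‖ ^ 2 := by
    intro i x
    exact Finset.single_le_sum (f := fun j => ‖Θ x j‖ ^ 2) (fun j _ => sq_nonneg _) (Finset.mem_univ i)
  have ht0 : Filter.Tendsto (fun x : ℤ => ‖Θ x 0‖ ^ 2) Filter.cofinite (nhds 0) :=
    squeeze_zero (fun x => sq_nonneg _) (hle 0) hg
  have ht2' : Filter.Tendsto (fun x : ℤ => ‖Θ x 2‖ ^ 2) Filter.cofinite (nhds 0) :=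
    squeeze_zero (fun x => sq_nonneg _) (hle 2) hg
  have hshift : Filter.Tendsto (fun x : ℤ => x + 1) Filter.cofinite Filter.cofinite :=
    (add_left_injective (1 : ℤ)).tendsto_cofinite
  have ht2 : Filter.Tendsto (fun x : ℤ => ‖Θ (x + 1) 2‖ ^ 2) Filter.cofinite (nhds 0) :=
    ht2'.comp hshift
  have hf0 : f 0 = 0 := by
    have hA2 : Filter.Tendsto f Filter.cofinite (nhds (f 0)) := by
      have : f = fun _ => f 0 := funext hconst
      rw [this]
      exact tendsto_const_nhds
    have hB2 : Filter.Tendsto f Filter.cofinite (nhds 0) := by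
      simpa [hf] using ht0.sub ht2
    exact tendsto_nhds_unique hA2 hB2
  have hJ : ∀ x, ‖Θ x 0‖ ^ 2 = ‖Θ (x + 1) 2‖ ^ 2 := by
    intro x
    have h := hconst x
    rw [hf0] at h
    have : ‖Θ x 0‖ ^ 2 - ‖Θ (x + 1) 2‖ ^ 2 = 0 := h
    linarith
  have hJ0 : ∀ x, Θ x 0 = 0 → Θ (x + 1) 2 = 0 := by
    intro x h
    have h2 : ‖Θ (x + 1) 2‖ ^ 2 = 0 := by
      rw [← hJ x, h, norm_zero]; ring
    have := (pow_eq_zero_iff two_ne_zero).mp h2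
    simpa using this
  have hJ0' : ∀ x, Θ (x + 1) 2 = 0 → Θ x 0 = 0 := by
    intro x h
    have h2 : ‖Θ x 0‖ ^ 2 = 0 := by
      rw [hJ x, h, norm_zero]; ring
    have := (pow_eq_zero_iff two_ne_zero).mp h2
    simpa using this
  -- forward step
  have hF : ∀ x, Θ x 0 = 0 → Θ (x + 1) 0 = 0 := by
    intro x h
    have h2 : Θ (x + 1) 2 = 0 := hJ0 x h
    have e1 := (heq x).1
    have e2 := (heq (x + 1)).2.1
    simp only [Fin.sum_univ_three] at e1 e2
    have hcomb : (a (x + 1) 0 0 * (μ - a (x + 1) 1 1) + a (x + 1) 0 1 * a (x + 1) 1 0)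
        * Θ (x + 1) 0 = 0 := by
      linear_combination (a (x + 1) 1 1 - μ) * e1 - a (x + 1) 0 1 * e2
        + (μ - a (x + 1) 1 1) * μ * h
        - ((μ - a (x + 1) 1 1) * a (x + 1) 0 2 + a (x + 1) 0 1 * a (x + 1) 1 2) * h2
    exact (mul_eq_zero.mp hcomb).resolve_left (hA' (x + 1))
  -- backward step
  have hB : ∀ x, Θ x 0 = 0 → Θ x 2 = 0 ∧ Θ (x - 1) 0 = 0 := by
    intro x h
    have h2 : Θ (x + 1) 2 = 0 := hJ0 x h
    have e3 := (heq (x + 1)).2.2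
    rw [show x + 1 - 1 = x by ring] at e3
    have e2 := (heq x).2.1
    simp only [Fin.sum_univ_three] at e2 e3
    have hcomb : (a x 2 2 * (μ - a x 1 1) + a x 2 1 * a x 1 2) * Θ x 2 = 0 := by
      linear_combination (a x 1 1 - μ) * e3 - a x 2 1 * e2
        - ((μ - a x 1 1) * a x 2 0 + a x 2 1 * a x 1 0) * h
        + (μ - a x 1 1) * μ * h2
    have hx2 : Θ x 2 = 0 := (mul_eq_zero.mp hcomb).resolve_left (hE x)
    refine ⟨hx2, ?_⟩
    apply hJ0' (x - 1)
    rwa [show x - 1 + 1 = x by ring]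
  -- all sites vanish
  have hall0 : ∀ x, Θ x 0 = 0 := by
    have hFn : ∀ n : ℕ, Θ (x₀ + n) 0 = 0 := by
      intro n
      induction n with
      | zero => simpa using h00
      | succ n ih =>
          have := hF (x₀ + n) ih
          push_cast
          rwa [show x₀ + ((n : ℤ) + 1) = x₀ + n + 1 by ring]
    have hBn : ∀ n : ℕ, Θ (x₀ - n) 0 = 0 := by
      intro n
      induction n with
      | zero => simpa using h00
      | succ n ih =>
          have := (hB (x₀ - n) ih).2
          push_cast
          rwa [show x₀ - ((n : ℤ) + 1) = x₀ - n - 1 by ring]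
    intro x
    rcases le_or_gt x₀ x with hx | hx
    · have := hFn (x - x₀).toNat
      rwa [show x₀ + ((x - x₀).toNat : ℤ) = x by rw [Int.toNat_of_nonneg (by omega)]; ring]
        at this
    · have := hBn (x₀ - x).toNat
      rwa [show x₀ - ((x₀ - x).toNat : ℤ) = x by rw [Int.toNat_of_nonneg (by omega)]; ring]
        at this
  have hall2 : ∀ x, Θ x 2 = 0 := fun x => (hB x (hall0 x)).1
  have hall1 : ∀ x, Θ x 1 = 0 := by
    intro x
    have e2 := (heq x).2.1
    simp only [Fin.sum_univ_three] at e2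
    have hc : (μ - a x 1 1) * Θ x 1 = 0 := by
      linear_combination e2 + a x 1 0 * hall0 x + a x 1 2 * hall2 x
    exact (mul_eq_zero.mp hc).resolve_left (hu x)
  funext x i
  fin_cases i
  · exact hall0 x
  · exact hall1 x
  · exact hall2 x

/-- for a two-phase walk with finitely many defects (with
`e^{iλ} ≠ a_x^{(2,2)}` and `A_x(λ) ≠ 0` for all `x`), if `e^{iλ}` is an eigenvalue of
`U` then the eigenspace `ker (U − e^{iλ})` is one-dimensional: it is spanned by a
single nonzero vector. -/
theorem two_phase_defects_eigenspace_one_dim (a : ℤ → Matrix (Fin 3) (Fin 3) ℂ)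
    (hunit : ∀ x, a x ∈ Matrix.unitaryGroup (Fin 3) ℂ)
    (h13 : ∀ x, ‖a x 0 2‖ ≠ 1) (h22 : ∀ x, ‖a x 1 1‖ ≠ 1) (h31 : ∀ x, ‖a x 2 0‖ ≠ 1)
    (xp xm : ℤ) (hxp : 0 ≤ xp) (hxm : xm < 0)
    (Cp Cm : Matrix (Fin 3) (Fin 3) ℂ)
    (hCp : ∀ x, xp ≤ x → a x = Cp) (hCm : ∀ x, x < xm → a x = Cm)
    (lam : ℝ) (hlam : lam ∈ Set.Ico 0 (2 * Real.pi))
    (hne : ∀ x, Complex.exp (lam * Complex.I) ≠ a x 1 1)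
    (hA : ∀ x, coefA (a x) lam ≠ 0)
    (heig : IsQWEigenvalue a (Complex.exp (lam * Complex.I))) :
    ∃ Ψ₀ : ℤ → Fin 3 → ℂ, Ψ₀ ≠ 0 ∧ QWKerMem a (Complex.exp (lam * Complex.I)) Ψ₀ ∧
      ∀ Φ : ℤ → Fin 3 → ℂ, QWKerMem a (Complex.exp (lam * Complex.I)) Φ →
        ∃ c : ℂ, Φ = c • Ψ₀ := by

  classical
  set μ := Complex.exp (lam * Complex.I) with hμdef
  obtain ⟨Ψ, hΨne, hΨker⟩ := heig
  have hvan : ∀ (Θ : ℤ → Fin 3 → ℂ), QWKerMem a μ Θ → ∀ x₀, Θ x₀ 0 = 0 → Θ = 0 :=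
    fun Θ hΘ x₀ h => QW_vanish a hunit lam hne hA Θ hΘ x₀ h
  have hΨ0 : ∀ x, Ψ x 0 ≠ 0 := by
    intro x h
    exact hΨne (hvan Ψ hΨker x h)
  refine ⟨Ψ, hΨne, hΨker, ?_⟩
  intro Φ hΦ
  set c : ℂ := Φ 0 0 / Ψ 0 0 with hcdef
  refine ⟨c, ?_⟩
  set Θ : ℤ → Fin 3 → ℂ := fun x i => Φ x i - c * Ψ x i with hΘdef
  have hΘker : QWKerMem a μ Θ := by
    constructor
    · have hbound : ∀ x : ℤ, ∑ i, ‖Θ x i‖ ^ 2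
          ≤ 2 * (∑ i, ‖Φ x i‖ ^ 2) + 2 * ‖c‖ ^ 2 * (∑ i, ‖Ψ x i‖ ^ 2) := by
        intro x
        have h1 : ∀ i : Fin 3, ‖Θ x i‖ ^ 2 ≤ 2 * ‖Φ x i‖ ^ 2 + 2 * ‖c‖ ^ 2 * ‖Ψ x i‖ ^ 2 := by
          intro i
          have h2 : ‖Θ x i‖ ≤ ‖Φ x i‖ + ‖c‖ * ‖Ψ x i‖ := by
            rw [hΘdef]
            simpa [norm_mul] using norm_sub_le (Φ x i) (c * Ψ x i)
          nlinarith [norm_nonneg (Θ x i), norm_nonneg (Φ x i), norm_nonneg (Ψ x i),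
            norm_nonneg c, sq_nonneg (‖Φ x i‖ - ‖c‖ * ‖Ψ x i‖)]
        calc ∑ i, ‖Θ x i‖ ^ 2
            ≤ ∑ i, (2 * ‖Φ x i‖ ^ 2 + 2 * ‖c‖ ^ 2 * ‖Ψ x i‖ ^ 2) :=
              Finset.sum_le_sum fun i _ => h1 i
          _ = 2 * (∑ i, ‖Φ x i‖ ^ 2) + 2 * ‖c‖ ^ 2 * (∑ i, ‖Ψ x i‖ ^ 2) := by
              rw [Finset.sum_add_distrib, ← Finset.mul_sum, ← Finset.mul_sum]
      exact Summable.of_nonneg_of_le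
        (fun x => Finset.sum_nonneg fun i _ => sq_nonneg _)
        hbound ((hΦ.1.mul_left 2).add (hΨker.1.mul_left (2 * ‖c‖ ^ 2)))
    · intro x
      obtain ⟨f1, f2, f3⟩ := hΦ.2 x
      obtain ⟨g1, g2, g3⟩ := hΨker.2 x
      simp only [Fin.sum_univ_three] at f1 f2 f3 g1 g2 g3 ⊢
      simp only [hΘdef]
      refine ⟨?_, ?_, ?_⟩
      · linear_combination f1 - c * g1
      · linear_combination f2 - c * g2
      · linear_combination f3 - c * g3
  have hΘ00 : Θ 0 0 = 0 := by
    simp only [hΘdef, hcdef]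
    field_simp [hΨ0 0]
    ring
  have hΘ0 : Θ = 0 := hvan Θ hΘker 0 hΘ00
  funext x i
  have h := congrFun (congrFun hΘ0 x) i
  simp only [hΘdef, Pi.zero_apply] at h
  have hxi : Φ x i = c * Ψ x i := by linear_combination h
  simp [Pi.smul_apply, smul_eq_mul, hxi]
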